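/- Let V be a topological vector space over ℝ, and let F = {v_n}_{n ∈ ℕ} ⊆ V be a bounded sequence. If A ⊆ V is a non-meager Baire set, then the set Δ_F(A) = {t ∈ ℝ : ∃ z ∈ V such that t·v_n + z ∈ A for all n ∈ ℕ} has nonempty interior in ℝ. -/

import Mathlib

open Set Filter Topology

/-- Translates of meager sets are meager. -/
private lemma meagre_preimage_addLeft
    {V : Type*} [AddCommGroup V] [TopologicalSpace V] [IsTopologicalAddGroup V]
    (c : V) {s : Set V} (hs : IsMeagre s) : IsMeagre ((fun y => c + y) ⁻¹' s) :=
  hs.preimage_of_isOpenMap (continuous_const.add continuous_id)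
    (Homeomorph.addLeft c).isOpenMap

/-- In a TVS in which some set is nonmeager, every nonempty open set is nonmeager. -/
private lemma open_nonmeagre
    {V : Type*} [AddCommGroup V] [Module ℝ V] [TopologicalSpace V]
    [IsTopologicalAddGroup V] [ContinuousSMul ℝ V]
    {A : Set V} (hA : ¬ IsMeagre A)
    {W : Set V} (hW : IsOpen W) (hne : W.Nonempty) : ¬ IsMeagre W := by
  intro hmeag
  obtain ⟨w₀, hw₀⟩ := hne
  set S : Set V := (fun x => x + w₀) ⁻¹' W with hS
  have hSmeag : IsMeagre S :=
    hmeag.preimage_of_isOpenMap (continuous_id.add continuous_const)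
      (Homeomorph.addRight w₀).isOpenMap
  have hSnhds : S ∈ 𝓝 (0 : V) := by
    have : IsOpen S := hW.preimage (continuous_id.add continuous_const)
    exact this.mem_nhds (by simpa [hS] using hw₀)
  have key : (univ : Set V) ⊆ ⋃ n : ℕ, (fun x : V => ((n : ℝ) + 1)⁻¹ • x) ⁻¹' S := by
    intro x _
    have h1 : Tendsto (fun n : ℕ => ((n : ℝ) + 1)⁻¹ • x) atTop (𝓝 ((0 : ℝ) • x)) := by
      apply Tendsto.smul_const
      simpa [one_div] using tendsto_one_div_add_atTop_nhds_zero_nat (𝕜 := ℝ)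
    rw [zero_smul] at h1
    obtain ⟨n, hn⟩ := (h1.eventually_mem hSnhds).exists
    exact mem_iUnion.mpr ⟨n, hn⟩
  have hmeagU : IsMeagre (⋃ n : ℕ, (fun x : V => ((n : ℝ) + 1)⁻¹ • x) ⁻¹' S) := by
    apply isMeagre_iUnion
    intro n
    have hc : ((n : ℝ) + 1)⁻¹ ≠ 0 := by positivity
    exact hSmeag.preimage_of_isOpenMap (continuous_const_smul _)
      (Homeomorph.smulOfNeZero _ hc).isOpenMap
  exact hA ((hmeagU.mono key).mono (subset_univ A))

/-- Main theorem in topological vector spaces: if `F = {v n}` is a bounded sequence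
in a topological vector space `V` and `A ⊆ V` is a non-meager set with the Baire
property, then `Δ_F(A) = {t : ∃ z, ∀ n, t • v n + z ∈ A}` has nonempty interior. -/
theorem deltaF_nonempty_interior_tvs
    (V : Type*) [AddCommGroup V] [Module ℝ V] [TopologicalSpace V]
    [IsTopologicalAddGroup V] [ContinuousSMul ℝ V]
    (v : ℕ → V)
    (hv_bounded : ∀ W : Set V, IsOpen W → W.Nonempty →
      ∃ t : ℝ, 0 < t ∧ ∃ z : V, ∀ n : ℕ, t • v n + z ∈ W)
    (A : Set V)
    (hA_nonmeager : ¬ IsMeagre A)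
    (hA_baire : ∃ U : Set V, IsOpen U ∧ IsMeagre (symmDiff A U)) :
    (interior {t : ℝ | ∃ z : V, ∀ n : ℕ, t • v n + z ∈ A}).Nonempty := by
  obtain ⟨U, hUopen, hsym⟩ := hA_baire
  have hMU : IsMeagre (U \ A) := hsym.mono fun x hx =>
    Set.mem_symmDiff.mpr (Or.inr ⟨hx.1, hx.2⟩)
  have hU_ne : U.Nonempty := by
    by_contra h
    rw [Set.not_nonempty_iff_eq_empty] at h
    apply hA_nonmeager
    apply hsym.mono
    intro x hx
    simp [Set.mem_symmDiff, h] at hx ⊢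
    tauto
  obtain ⟨u₀, hu₀⟩ := hU_ne
  -- a balanced neighborhood N of 0 with u₀ + N + N + N ⊆ U
  have hs₁ : {x : V | u₀ + x ∈ U} ∈ 𝓝 (0 : V) := by
    have : Continuous fun x : V => u₀ + x := continuous_const.add continuous_id
    have := hUopen.preimage this
    exact this.mem_nhds (by simpa using hu₀)
  obtain ⟨N₁, hN₁, hN₁add⟩ := exists_nhds_zero_half hs₁
  obtain ⟨N₂, hN₂, hN₂add⟩ := exists_nhds_zero_half hN₁
  have hN' : N₂ ∩ N₁ ∈ 𝓝 (0 : V) := Filter.inter_mem hN₂ hN₁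
  set N : Set V := balancedCore ℝ (N₂ ∩ N₁) with hNdef
  have hNnhds : N ∈ 𝓝 (0 : V) := balancedCore_mem_nhds_zero hN'
  have hNbal : Balanced ℝ N := balancedCore_balanced _
  have hNsub : N ⊆ N₂ ∩ N₁ := balancedCore_subset _
  have habc : ∀ a ∈ N, ∀ b ∈ N, ∀ y ∈ N, u₀ + (a + b + y) ∈ U := by
    intro a ha b hb y hy
    have hab : a + b ∈ N₁ := hN₂add a (hNsub ha).1 b (hNsub hb).1
    exact hN₁add _ hab _ (hNsub hy).2
  -- apply boundedness twice
  have hintN : (interior N).Nonempty := ⟨0, mem_interior_iff_mem_nhds.mpr hNnhds⟩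
  obtain ⟨t₀, ht₀, z₀, h₀⟩ := hv_bounded (interior N) isOpen_interior hintN
  obtain ⟨s, hs, w, hw⟩ := hv_bounded (interior N) isOpen_interior hintN
  refine ⟨t₀, interior_maximal ?_ isOpen_Ioo (by constructor <;> linarith : t₀ ∈ Ioo (t₀ - s) (t₀ + s))⟩
  intro t ht
  set lam : ℝ := (t - t₀) / s with hlam
  have hlam1 : ‖lam‖ ≤ 1 := by
    rw [Real.norm_eq_abs, hlam, abs_div, abs_of_pos hs, div_le_one hs, abs_le]
    exact ⟨by linarith [ht.1], by linarith [ht.2]⟩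
  have hlams : lam * s = t - t₀ := div_mul_cancel₀ _ hs.ne'
  -- bad set
  set B : Set V :=
    ⋃ n : ℕ, (fun y : V => (u₀ + ((t₀ • v n + z₀) + lam • (s • v n + w))) + y) ⁻¹' (U \ A)
    with hB
  have hBmeag : IsMeagre B :=
    isMeagre_iUnion fun n => meagre_preimage_addLeft _ hMU
  have hNnotsub : ¬ N ⊆ B := by
    intro hsub
    exact open_nonmeagre hA_nonmeager isOpen_interior hintN
      ((hBmeag.mono hsub).mono interior_subset)
  obtain ⟨y, hyN, hyB⟩ := Set.not_subset.mp hNnotsub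
  refine ⟨u₀ + (z₀ + lam • w) + y, fun n => ?_⟩
  have ha : t₀ • v n + z₀ ∈ N := interior_subset (h₀ n)
  have hb : lam • (s • v n + w) ∈ N := hNbal.smul_mem hlam1 (interior_subset (hw n))
  have hpt : (u₀ + ((t₀ • v n + z₀) + lam • (s • v n + w))) + y ∈ U := by
    have := habc _ ha _ hb _ hyN
    convert this using 1
    abel
  have hptA : (u₀ + ((t₀ • v n + z₀) + lam • (s • v n + w))) + y ∈ A := by
    by_contra hnA
    exact hyB (mem_iUnion.mpr ⟨n, hpt, hnA⟩)
  have heq : t • v n + (u₀ + (z₀ + lam • w) + y)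
      = (u₀ + ((t₀ • v n + z₀) + lam • (s • v n + w))) + y := by
    have hts : t • v n = t₀ • v n + lam • (s • v n) := by
      rw [smul_smul, hlams, ← add_smul]
      congr 1
      ring
    rw [hts, smul_add]
    abel
  rw [heq]
  exact hptA
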